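/- arXiv:2410.04281 — 2 statements merged into one kernel-verified Lean document; each statement's English description precedes it below -/
import Mathlib

section
/- Consider the single-node MDP with state (s,r), action u ∈ {0,1}, per-stage cost C(s,r,u) = ω(r)·s + η·u with η > 0 and ω(r) ≥ 0, where action u=1 from any state (s,r) with s>0 leads to age 0 with probability 1−λ and age 1 with probability λ, and action u=0 leads to age s+1; the weight component transitions independently according to P. Then the optimal (discounted, discount factor β ∈ (0,1)) value function V(s,r) is nondecreasing in s for each fixed r. -/
open Finset Filter Topology

/-- The optimal discounted value function of the single-node AoS MDP, obtained as
the pointwise limit of value iteration starting from 0, is nondecreasing in the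
age `s` for each fixed weight state `r`. -/
theorem value_function_monotone_in_age {R : Type*} [Fintype R]
    (P : R → R → ℝ) (hPnn : ∀ r r', 0 ≤ P r r') (hProw : ∀ r, ∑ r', P r r' = 1)
    (lam : ℝ) (hlam0 : 0 ≤ lam) (hlam1 : lam ≤ 1)
    (ω : R → ℝ) (hω : ∀ r, 0 ≤ ω r)
    (η : ℝ) (hη : 0 < η) (β : ℝ) (hβ0 : 0 < β) (hβ1 : β < 1)
    (Vk : ℕ → ℕ → R → ℝ)
    (hV0 : ∀ s r, Vk 0 s r = 0)
    (hVrec : ∀ k s r, Vk (k + 1) s r =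
      if s = 0 then
        min (ω r * s + η + β * ∑ r', P r r' * ((1 - lam) * Vk k 0 r' + lam * Vk k 1 r'))
            (ω r * s + β * ∑ r', P r r' * ((1 - lam) * Vk k 0 r' + lam * Vk k 1 r'))
      else
        min (ω r * s + η + β * ∑ r', P r r' * ((1 - lam) * Vk k 0 r' + lam * Vk k 1 r'))
            (ω r * s + β * ∑ r', P r r' * Vk k (s + 1) r'))
    (V : ℕ → R → ℝ)
    (hlim : ∀ s r, Tendsto (fun k => Vk k s r) atTop (𝓝 (V s r))) :
    ∀ r, Monotone fun s => V s r := by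
  have key : ∀ k r, Monotone fun s => Vk k s r := by
    intro k
    induction k with
    | zero => intro r; simp only [hV0]; exact monotone_const
    | succ k ih =>
      intro r
      apply monotone_nat_of_le_succ
      intro s
      rw [hVrec, hVrec]
      have hsum : ∀ a b : ℕ, a ≤ b →
          ∑ r', P r r' * Vk k a r' ≤ ∑ r', P r r' * Vk k b r' := by
        intro a b hab
        exact Finset.sum_le_sum fun r' _ =>
          mul_le_mul_of_nonneg_left (ih r' hab) (hPnn r r')
      have hWle : ∀ b : ℕ, 1 ≤ b →
          ∑ r', P r r' * ((1 - lam) * Vk k 0 r' + lam * Vk k 1 r') ≤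
          ∑ r', P r r' * Vk k b r' := by
        intro b hb
        refine Finset.sum_le_sum fun r' _ => mul_le_mul_of_nonneg_left ?_ (hPnn r r')
        have h0 : Vk k 0 r' ≤ Vk k b r' := ih r' (Nat.zero_le b)
        have h1 : Vk k 1 r' ≤ Vk k b r' := ih r' hb
        nlinarith
      cases s with
      | zero =>
        norm_num
        refine ⟨Or.inl (hω r), Or.inr ?_⟩
        have h := mul_le_mul_of_nonneg_left (hWle 2 (by norm_num)) hβ0.le
        linarith [hω r]
      | succ n =>
        rw [if_neg (by simp), if_neg (by simp)]
        refine min_le_min ?_ ?_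
        · have : ω r * (n + 1 : ℕ) ≤ ω r * (n + 1 + 1 : ℕ) := by
            apply mul_le_mul_of_nonneg_left _ (hω r)
            push_cast; linarith
          linarith
        · have h1 : ω r * (n + 1 : ℕ) ≤ ω r * (n + 1 + 1 : ℕ) := by
            apply mul_le_mul_of_nonneg_left _ (hω r)
            push_cast; linarith
          have h2 := hsum (n + 1 + 1) (n + 1 + 1 + 1) (by omega)
          nlinarith
  intro r s s' hss'
  exact le_of_tendsto_of_tendsto' (hlim s r) (hlim s' r) fun k => key k r hss'
end

section
/- In the single-node MDP above (discounted with factor β ∈ (0,1)), if for state (s₁,r) the action u=1 is optimal (i.e., C(s₁,r,1)+β·E₁[V] ≤ C(s₁,r,0)+β·E₀[V(s₁+1,·)]), then for every s ≥ s₁ the action u=1 is also optimal in state (s,r). Consequently the optimal policy has a threshold structure in s for each fixed r. -/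
open Finset

/-- Threshold structure of the optimal policy: if transmitting (u = 1) is optimal at
age `s₁` (for weight state `r`), then it is optimal at every age `s ≥ s₁`. -/
theorem threshold_structure {R : Type*} [Fintype R]
    (P : R → R → ℝ) (hPnn : ∀ r r', 0 ≤ P r r') (hProw : ∀ r, ∑ r', P r r' = 1)
    (lam : ℝ) (hlam0 : 0 ≤ lam) (hlam1 : lam ≤ 1)
    (ω : R → ℝ) (hω : ∀ r, 0 ≤ ω r)
    (η : ℝ) (hη : 0 < η) (β : ℝ) (hβ0 : 0 < β) (hβ1 : β < 1)
    (V : ℕ → R → ℝ) (hVmono : ∀ r', Monotone fun s => V s r')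
    (r : R) (s₁ : ℕ) (hs₁ : 0 < s₁)
    (hopt : ω r * s₁ + η + β * ∑ r', P r r' * ((1 - lam) * V 0 r' + lam * V 1 r')
            ≤ ω r * s₁ + β * ∑ r', P r r' * V (s₁ + 1) r') :
    ∀ s, s₁ ≤ s →
      ω r * s + η + β * ∑ r', P r r' * ((1 - lam) * V 0 r' + lam * V 1 r')
        ≤ ω r * s + β * ∑ r', P r r' * V (s + 1) r' := by
  intro s hs
  have key : ∑ r', P r r' * V (s₁ + 1) r' ≤ ∑ r', P r r' * V (s + 1) r' := by
    apply Finset.sum_le_sum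
    intro i _
    exact mul_le_mul_of_nonneg_left (hVmono i (by omega)) (hPnn r i)
  have h1 : η + β * ∑ r', P r r' * ((1 - lam) * V 0 r' + lam * V 1 r')
      ≤ β * ∑ r', P r r' * V (s₁ + 1) r' := by linarith
  have h2 := mul_le_mul_of_nonneg_left key hβ0.le
  linarith
end
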